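/- Let G be a finite simple graph with m edges, let H be a finite simple graph, and let ψ be a fractional edge-cover of H. Then the number of subgraphs of G isomorphic to H is at most Π_{e ∈ E_H} (2m)^{ψ(e)}; in particular, the number of subgraphs of G isomorphic to H is at most (2m)^{ρ(H)}. -/

import Mathlib

open Finset

open scoped Classical in
/-- `ψ` is a fractional edge-cover of `H`: it maps each edge to `[0,1]` and every vertex is
covered with total weight at least `1`. -/
def IsFracEdgeCover {V : Type*} [Fintype V] (H : SimpleGraph V) (ψ : Sym2 V → ℝ) : Prop :=
  (∀ e ∈ H.edgeFinset, 0 ≤ ψ e ∧ ψ e ≤ 1) ∧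
  (∀ v : V, 1 ≤ ∑ e ∈ H.edgeFinset.filter (fun e => v ∈ e), ψ e)

open scoped Classical in
/-- The total weight `Σ_{e ∈ E_H} ψ(e)` of a weighting `ψ`. -/
noncomputable def coverWeight {V : Type*} [Fintype V] (H : SimpleGraph V) (ψ : Sym2 V → ℝ) : ℝ :=
  ∑ e ∈ H.edgeFinset, ψ e

/-- The fractional edge-cover number `ρ(H)`. -/
noncomputable def fracEdgeCoverNum {V : Type*} [Fintype V] (H : SimpleGraph V) : ℝ :=
  sInf {x : ℝ | ∃ ψ : Sym2 V → ℝ, IsFracEdgeCover H ψ ∧ x = coverWeight H ψ}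

open Real


open scoped Classical in
lemma sum_update_eq {V W : Type*} [Fintype V] [Fintype W] (w : W)
    (F : (W → V) → ℝ) :
    ∑ f : W → V, ∑ x : V, F (Function.update f w x)
      = (Fintype.card V : ℝ) * ∑ f : W → V, F f := by
  classical
  rw [(Fintype.sum_prod_type (f := fun p : (W → V) × V => F (Function.update p.1 w p.2))).symm]
  rw [Fintype.sum_bijective
    (fun p : (W → V) × V => (Function.update p.1 w p.2, p.1 w)) ?_ _ (fun q => F q.1) (fun _ => rfl)]
  · rw [Fintype.sum_prod_type]
    simp [Finset.sum_const, mul_comm, Finset.mul_sum]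
  · apply Function.bijective_iff_has_inverse.2
    refine ⟨fun q => (Function.update q.1 w q.2, q.1 w), ?_, ?_⟩
    · rintro ⟨f, x⟩
      simp [Function.update_idem, Function.update_self, Function.update_eq_self]
    · rintro ⟨g, y⟩
      simp [Function.update_idem, Function.update_self, Function.update_eq_self]

lemma jensen_rpow {V : Type*} (N : Finset V) (d : V → ℝ) (hd : ∀ x ∈ N, 0 ≤ d x)
    {b : ℝ} (hb0 : 0 ≤ b) (hb1 : b ≤ 1) :
    ∑ x ∈ N, d x ^ b ≤ (N.card : ℝ) ^ (1 - b) * (∑ x ∈ N, d x) ^ b := by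
  rcases N.eq_empty_or_nonempty with rfl | hN
  · simp; positivity
  rcases eq_or_lt_of_le hb0 with rfl | hb
  · simp only [rpow_zero, mul_one, sub_zero, Finset.sum_const, nsmul_eq_mul, mul_one,
      rpow_one]
    exact le_rfl
  have hn : (0:ℝ) < N.card := by exact_mod_cast Finset.card_pos.mpr hN
  have key := Real.arith_mean_le_rpow_mean N (fun _ => (N.card : ℝ)⁻¹) (fun x => d x ^ b)
    (fun i _ => by positivity) (by simp [Finset.sum_const]; field_simp)
    (fun i hi => rpow_nonneg (hd i hi) b) (p := 1/b) (by rw [le_div_iff₀ hb]; simpa)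
  rw [← Finset.mul_sum, ← Finset.mul_sum, one_div_one_div] at key
  have h2 : ∀ x ∈ N, (d x ^ b) ^ (1/b) = d x := by
    intro x hx
    rw [← Real.rpow_mul (hd x hx), mul_one_div, div_self (ne_of_gt hb), rpow_one]
  rw [Finset.sum_congr rfl h2] at key
  have h3 : ((N.card:ℝ)⁻¹ * ∑ x ∈ N, d x) ^ b = ((N.card:ℝ)⁻¹) ^ b * (∑ x ∈ N, d x) ^ b :=
    Real.mul_rpow (by positivity) (Finset.sum_nonneg hd)
  rw [h3] at key
  calc ∑ x ∈ N, d x ^ b = (N.card : ℝ) * ((N.card:ℝ)⁻¹ * ∑ x ∈ N, d x ^ b) := by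
        field_simp
    _ ≤ (N.card : ℝ) * (((N.card:ℝ)⁻¹) ^ b * (∑ x ∈ N, d x) ^ b) := by
        apply mul_le_mul_of_nonneg_left key (le_of_lt hn)
    _ = (N.card : ℝ) ^ (1 - b) * (∑ x ∈ N, d x) ^ b := by
        rw [← mul_assoc]
        congr 1
        rw [show (1:ℝ) - b = 1 + (-b) by ring, Real.rpow_add hn, Real.rpow_one,
          Real.rpow_neg hn.le, ← Real.inv_rpow hn.le]



open scoped Classical in
lemma stepBound {V W : Type*} [Fintype V] [Fintype W] (G : SimpleGraph V)
    (w : W) (f : W → V) (u : Sym2 W → W) (Ew : Finset (Sym2 W)) (ψ : Sym2 W → ℝ)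
    (hψ0 : ∀ e ∈ Ew, 0 ≤ ψ e)
    (hu : ∀ e ∈ Ew, s(w, u e) = e ∧ u e ≠ w)
    {b : ℝ} (hb : 0 ≤ b) (hcov : 1 ≤ b + ∑ e ∈ Ew, ψ e) :
    ∑ x : V, (if ∀ e ∈ Ew, Sym2.map (Function.update f w x) e ∈ G.edgeFinset then (1:ℝ) else 0)
        * (G.degree x : ℝ) ^ b
      ≤ (2 * G.edgeFinset.card : ℝ) ^ b * ∏ e ∈ Ew, (G.degree (f (u e)) : ℝ) ^ ψ e := by
  classical
  set M : ℝ := (2 * G.edgeFinset.card : ℝ) with hM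
  set d : V → ℝ := fun x => (G.degree x : ℝ) with hd
  have hd0 : ∀ x, 0 ≤ d x := fun x => Nat.cast_nonneg _
  have hM0 : 0 ≤ M := by positivity
  have hsum : ∑ x : V, d x = M := by
    have h := SimpleGraph.sum_degrees_eq_twice_card_edges G
    simp only [hd, hM]
    exact_mod_cast congrArg (Nat.cast : ℕ → ℝ) h
  have hdM : ∀ x, d x ≤ M := by
    intro x
    rw [← hsum]
    exact Finset.single_le_sum (fun i _ => hd0 i) (Finset.mem_univ x)
  -- membership condition rewrites to adjacency
  have hmem : ∀ x : V, ∀ e ∈ Ew,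
      (Sym2.map (Function.update f w x) e ∈ G.edgeFinset ↔ G.Adj x (f (u e))) := by
    intro x e he
    obtain ⟨hspec, hne⟩ := hu e he
    have h1 : Sym2.map (Function.update f w x) e = s(x, f (u e)) := by
      conv_lhs => rw [← hspec]
      rw [Sym2.map_pair_eq, Function.update_self, Function.update_of_ne hne]
    rw [h1, SimpleGraph.mem_edgeFinset, SimpleGraph.mem_edgeSet]
  set N : Finset V := Finset.univ.filter (fun x => ∀ e ∈ Ew, G.Adj x (f (u e))) with hN
  have hLHS : ∑ x : V, (if ∀ e ∈ Ew, Sym2.map (Function.update f w x) e ∈ G.edgeFinset then (1:ℝ) else 0)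
      * d x ^ b = ∑ x ∈ N, d x ^ b := by
    rw [Finset.sum_filter]
    apply Finset.sum_congr rfl
    intro x _
    by_cases h : ∀ e ∈ Ew, G.Adj x (f (u e))
    · rw [if_pos h, if_pos, one_mul]
      intro e he; exact (hmem x e he).2 (h e he)
    · rw [if_neg h, if_neg, zero_mul]
      intro hc; exact h (fun e he => (hmem x e he).1 (hc e he))
  rw [hLHS]
  have hNdeg : ∀ e ∈ Ew, (N.card : ℝ) ≤ d (f (u e)) := by
    intro e he
    have hsub : N ⊆ G.neighborFinset (f (u e)) := by
      intro x hx
      rw [SimpleGraph.mem_neighborFinset]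
      exact ((Finset.mem_filter.1 hx).2 e he).symm
    have h2 := Finset.card_le_card hsub
    rw [SimpleGraph.card_neighborFinset_eq_degree] at h2
    simp only [hd]
    exact_mod_cast h2
  have hprod0 : 0 ≤ ∏ e ∈ Ew, d (f (u e)) ^ ψ e :=
    Finset.prod_nonneg (fun e _ => rpow_nonneg (hd0 _) _)
  rcases N.eq_empty_or_nonempty with hNe | hNe
  · rw [hNe, Finset.sum_empty]
    positivity
  have hN1 : (1:ℝ) ≤ N.card := by exact_mod_cast Finset.card_pos.mpr hNe
  have hsumN : ∑ x ∈ N, d x ≤ M := by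
    rw [← hsum]
    exact Finset.sum_le_sum_of_subset_of_nonneg (Finset.subset_univ N)
      (fun i _ _ => hd0 i)
  by_cases hb1 : b ≤ 1
  · -- Jensen case
    calc ∑ x ∈ N, d x ^ b
        ≤ (N.card : ℝ) ^ (1 - b) * (∑ x ∈ N, d x) ^ b :=
          jensen_rpow N d (fun x _ => hd0 x) hb hb1
      _ ≤ (N.card : ℝ) ^ (1 - b) * M ^ b := by
          apply mul_le_mul_of_nonneg_left
            (rpow_le_rpow (Finset.sum_nonneg (fun x _ => hd0 x)) hsumN hb)
            (rpow_nonneg (by positivity) _)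
      _ ≤ (∏ e ∈ Ew, d (f (u e)) ^ ψ e) * M ^ b := by
          apply mul_le_mul_of_nonneg_right _ (rpow_nonneg hM0 _)
          calc (N.card : ℝ) ^ (1 - b)
              ≤ (N.card : ℝ) ^ (∑ e ∈ Ew, ψ e) :=
                rpow_le_rpow_of_exponent_le hN1 (by linarith)
            _ = ∏ e ∈ Ew, (N.card : ℝ) ^ ψ e :=
                rpow_sum_of_nonneg (by positivity) hψ0
            _ ≤ ∏ e ∈ Ew, d (f (u e)) ^ ψ e := by
                apply Finset.prod_le_prod (fun e _ => rpow_nonneg (by positivity) _)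
                intro e he
                exact rpow_le_rpow (by positivity) (hNdeg e he) (hψ0 e he)
      _ = M ^ b * ∏ e ∈ Ew, d (f (u e)) ^ ψ e := mul_comm _ _
  · -- b ≥ 1 case
    push_neg at hb1
    have h1 : ∑ x ∈ N, d x ^ b ≤ M ^ b := by
      have : ∀ x ∈ N, d x ^ b ≤ d x * M ^ (b - 1) := by
        intro x _
        have hsplit : d x ^ b = d x * d x ^ (b - 1) := by
          nth_rewrite 1 [show b = 1 + (b - 1) by ring]
          rw [rpow_add_of_nonneg (hd0 x) zero_le_one (by linarith), rpow_one]
        rw [hsplit]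
        exact mul_le_mul_of_nonneg_left (rpow_le_rpow (hd0 x) (hdM x) (by linarith)) (hd0 x)
      calc ∑ x ∈ N, d x ^ b ≤ ∑ x ∈ N, d x * M ^ (b - 1) := Finset.sum_le_sum this
        _ = (∑ x ∈ N, d x) * M ^ (b - 1) := by rw [Finset.sum_mul]
        _ ≤ M * M ^ (b - 1) :=
            mul_le_mul_of_nonneg_right hsumN (rpow_nonneg hM0 _)
        _ = M ^ b := by
            nth_rewrite 2 [show b = 1 + (b - 1) by ring]
            rw [rpow_add_of_nonneg hM0 zero_le_one (by linarith), rpow_one]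
    have h2 : (1:ℝ) ≤ ∏ e ∈ Ew, d (f (u e)) ^ ψ e := by
      calc (1:ℝ) = ∏ _e ∈ Ew, (1:ℝ) := by simp
        _ ≤ ∏ e ∈ Ew, d (f (u e)) ^ ψ e := by
            apply Finset.prod_le_prod (fun _ _ => zero_le_one)
            intro e he
            exact Real.one_le_rpow (le_trans hN1 (hNdeg e he)) (hψ0 e he)
    calc ∑ x ∈ N, d x ^ b ≤ M ^ b := h1
      _ ≤ M ^ b * ∏ e ∈ Ew, d (f (u e)) ^ ψ e :=
          le_mul_of_one_le_right (rpow_nonneg hM0 _) h2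

open scoped Classical in
lemma key_ind {V W : Type*} [Fintype V] [Fintype W] (G : SimpleGraph V) (ψ : Sym2 W → ℝ)
    (n : ℕ) :
    ∀ (s : Finset W) (E : Finset (Sym2 W)) (β : W → ℝ),
    s.card = n →
    (∀ e ∈ E, 0 ≤ ψ e) → (∀ e ∈ E, ¬ e.IsDiag) → (∀ e ∈ E, ∀ v ∈ e, v ∈ s) →
    (∀ v ∈ s, 0 ≤ β v) →
    (∀ v ∈ s, 1 ≤ β v + ∑ e ∈ E.filter (fun e => v ∈ e), ψ e) →
    ∑ f : W → V, (if ∀ e ∈ E, Sym2.map f e ∈ G.edgeFinset then (1:ℝ) else 0)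
        * ∏ v ∈ s, (G.degree (f v) : ℝ) ^ β v
      ≤ (Fintype.card V : ℝ) ^ (sᶜ.card) *
        ((∏ e ∈ E, (2 * G.edgeFinset.card : ℝ) ^ ψ e)
          * ∏ v ∈ s, (2 * G.edgeFinset.card : ℝ) ^ β v) := by
  induction n with
  | zero =>
    intro s E β hs hψ0 hdiag hends hβ0 hcov
    rw [Finset.card_eq_zero] at hs
    subst hs
    have hE : E = ∅ := by
      rw [Finset.eq_empty_iff_forall_notMem]
      intro e he
      exact absurd (hends e he e.out.1 (Sym2.out_fst_mem e)) (Finset.notMem_empty _)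
    subst hE
    simp only [Finset.notMem_empty, false_implies, implies_true, if_true, Finset.prod_empty,
      mul_one, one_mul, Finset.sum_const, Finset.card_univ, nsmul_eq_mul, Finset.compl_empty]
    rw [Fintype.card_fun]
    push_cast
    exact le_rfl
  | succ n ih =>
    intro s E β hs hψ0 hdiag hends hβ0 hcov
    have hsne : s.Nonempty := Finset.card_pos.mp (by omega)
    obtain ⟨w, hw⟩ := hsne
    set M : ℝ := (2 * G.edgeFinset.card : ℝ) with hMdef
    set d : V → ℝ := fun x => (G.degree x : ℝ) with hddef
    have hd0 : ∀ x, 0 ≤ d x := fun x => Nat.cast_nonneg _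
    have hM0 : (0:ℝ) ≤ M := by positivity
    set s' := s.erase w with hs'def
    set Ew := E.filter (fun e => w ∈ e) with hEwdef
    set E' := E.filter (fun e => ¬ w ∈ e) with hE'def
    have hEwE : Ew ⊆ E := Finset.filter_subset _ _
    have hE'E : E' ⊆ E := Finset.filter_subset _ _
    set u : Sym2 W → W := fun e => if h : w ∈ e then Sym2.Mem.other h else w with hudef
    have hu_spec : ∀ e ∈ Ew, s(w, u e) = e ∧ u e ≠ w ∧ u e ∈ s' ∧ u e ∈ e := by
      intro e he
      rw [hEwdef, Finset.mem_filter] at he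
      have hwe : w ∈ e := he.2
      have h1 : u e = Sym2.Mem.other hwe := by rw [hudef]; simp [dif_pos hwe]
      have hspec : s(w, u e) = e := by rw [h1]; exact Sym2.other_spec hwe
      have hne : u e ≠ w := by rw [h1]; exact Sym2.other_ne (hdiag e he.1) hwe
      have hmem : u e ∈ s' := by
        rw [hs'def, Finset.mem_erase]
        refine ⟨hne, hends e he.1 _ ?_⟩
        rw [h1]; exact Sym2.other_mem hwe
      have hue : u e ∈ e := by rw [h1]; exact Sym2.other_mem hwe
      exact ⟨hspec, hne, hmem, hue⟩
    set β' : W → ℝ := fun v => β v + ∑ e ∈ Ew.filter (fun e => v ∈ e), ψ e with hβ'def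
    -- product transfer
    have htrans : ∀ g : W → ℝ, (∀ v, 0 ≤ g v) →
        ∏ e ∈ Ew, g (u e) ^ ψ e
          = ∏ v ∈ s', g v ^ (∑ e ∈ Ew.filter (fun e => v ∈ e), ψ e) := by
      intro g hg
      have h1 : ∀ v ∈ s', g v ^ (∑ e ∈ Ew.filter (fun e => v ∈ e), ψ e)
          = ∏ e ∈ Ew.filter (fun e => v ∈ e), g v ^ ψ e := fun v _ =>
        Real.rpow_sum_of_nonneg (hg v)
          (fun e he => hψ0 e (hEwE (Finset.mem_of_mem_filter e he)))
      rw [Finset.prod_congr rfl h1]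
      rw [Finset.prod_comm' (t' := Ew) (s' := fun e => s'.filter (fun v => v ∈ e))
        (f := fun v e => g v ^ ψ e) ?hcomm]
      case hcomm =>
        intro v e
        simp only [Finset.mem_filter]
        tauto
      apply Finset.prod_congr rfl
      intro e he
      have hfil : s'.filter (fun v => v ∈ e) = {u e} := by
        obtain ⟨hspec, hne, hmem, hue⟩ := hu_spec e he
        ext v
        simp only [Finset.mem_filter, Finset.mem_singleton]
        constructor
        · rintro ⟨hv1, hv2⟩
          rw [← hspec, Sym2.mem_iff] at hv2
          rcases hv2 with rfl | rfl
          · exact absurd rfl (Finset.ne_of_mem_erase hv1)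
          · rfl
        · rintro rfl
          exact ⟨hmem, hue⟩
      rw [hfil, Finset.prod_singleton]
    -- cover sum split
    have hsplit_cov : ∀ v : W, (∑ e ∈ E.filter (fun e => v ∈ e), ψ e)
        = (∑ e ∈ Ew.filter (fun e => v ∈ e), ψ e)
          + (∑ e ∈ E'.filter (fun e => v ∈ e), ψ e) := by
      intro v
      rw [hEwdef, hE'def, Finset.filter_filter, Finset.filter_filter,
        Finset.sum_filter, Finset.sum_filter, Finset.sum_filter, ← Finset.sum_add_distrib]
      apply Finset.sum_congr rfl
      intro e _
      by_cases h1 : v ∈ e <;> by_cases h2 : w ∈ e <;> simp [h1, h2]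
    by_cases hVzero : Fintype.card V = 0
    · haveI : IsEmpty V := Fintype.card_eq_zero_iff.mp hVzero
      haveI : IsEmpty (W → V) := ⟨fun f => IsEmpty.false (f w)⟩
      rw [Finset.univ_eq_empty (α := W → V), Finset.sum_empty]
      apply mul_nonneg (pow_nonneg (Nat.cast_nonneg _) _)
      exact mul_nonneg
        (Finset.prod_nonneg fun e _ => Real.rpow_nonneg hM0 _)
        (Finset.prod_nonneg fun v _ => Real.rpow_nonneg hM0 _)
    have hC : (0:ℝ) < (Fintype.card V : ℝ) := by
      have := Nat.pos_of_ne_zero hVzero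
      exact_mod_cast this
    set C : ℝ := (Fintype.card V : ℝ) with hCdef
    set F : (W → V) → ℝ := fun f =>
      (if ∀ e ∈ E, Sym2.map f e ∈ G.edgeFinset then (1:ℝ) else 0)
        * ∏ v ∈ s, d (f v) ^ β v with hFdef
    set F' : (W → V) → ℝ := fun f =>
      (if ∀ e ∈ E', Sym2.map f e ∈ G.edgeFinset then (1:ℝ) else 0)
        * ∏ v ∈ s', d (f v) ^ β' v with hF'def
    have hmapE' : ∀ (f : W → V) (x : V) (e : Sym2 W), ¬ w ∈ e →
        Sym2.map (Function.update f w x) e = Sym2.map f e := by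
      intro f x e
      induction e using Sym2.ind with
      | _ a b =>
        intro hwe
        simp only [Sym2.mem_iff, not_or] at hwe
        rw [Sym2.map_pair_eq, Sym2.map_pair_eq,
          Function.update_of_ne (fun h => hwe.1 h.symm),
          Function.update_of_ne (fun h => hwe.2 h.symm)]
    have hiff : ∀ f' : W → V, (∀ e ∈ E, Sym2.map f' e ∈ G.edgeFinset) ↔
        ((∀ e ∈ Ew, Sym2.map f' e ∈ G.edgeFinset) ∧
          (∀ e ∈ E', Sym2.map f' e ∈ G.edgeFinset)) := by
      intro f'
      constructor
      · intro h
        exact ⟨fun e he => h e (hEwE he), fun e he => h e (hE'E he)⟩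
      · rintro ⟨h1, h2⟩ e he
        by_cases hwe : w ∈ e
        · exact h1 e (by rw [hEwdef, Finset.mem_filter]; exact ⟨he, hwe⟩)
        · exact h2 e (by rw [hE'def, Finset.mem_filter]; exact ⟨he, hwe⟩)
    have h_upd : ∀ (f : W → V) (x : V), F (Function.update f w x) =
        ((if ∀ e ∈ Ew, Sym2.map (Function.update f w x) e ∈ G.edgeFinset then (1:ℝ) else 0)
            * d x ^ β w)
        * ((if ∀ e ∈ E', Sym2.map f e ∈ G.edgeFinset then (1:ℝ) else 0)
            * ∏ v ∈ s', d (f v) ^ β v) := by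
      intro f x
      have hprod : ∏ v ∈ s, d (Function.update f w x v) ^ β v
          = d x ^ β w * ∏ v ∈ s', d (f v) ^ β v := by
        rw [← Finset.mul_prod_erase s _ hw, Function.update_self]
        rw [← hs'def]
        congr 1
        apply Finset.prod_congr rfl
        intro v hv
        rw [Function.update_of_ne (Finset.ne_of_mem_erase (hs'def ▸ hv))]
      have hcond : (∀ e ∈ E', Sym2.map (Function.update f w x) e ∈ G.edgeFinset)
          ↔ (∀ e ∈ E', Sym2.map f e ∈ G.edgeFinset) := by
        apply forall₂_congr
        intro e he
        rw [hmapE' f x e (by rw [hE'def] at he; exact (Finset.mem_filter.mp he).2)]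
      simp only [hFdef]
      rw [hprod, if_congr ((hiff _).trans (and_congr_right fun _ => hcond)) rfl rfl]
      by_cases h1 : ∀ e ∈ Ew, Sym2.map (Function.update f w x) e ∈ G.edgeFinset <;>
        by_cases h2 : ∀ e ∈ E', Sym2.map f e ∈ G.edgeFinset
      · rw [if_pos ⟨h1, h2⟩, if_pos h1, if_pos h2]; ring
      · rw [if_neg (by tauto), if_pos h1, if_neg h2]; ring
      · rw [if_neg (by tauto), if_neg h1, if_pos h2]; ring
      · rw [if_neg (by tauto), if_neg h1, if_neg h2]; ring
    have hstep : ∀ f : W → V, ∑ x : V, F (Function.update f w x) ≤ M ^ β w * F' f := by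
      intro f
      have hcovw : 1 ≤ β w + ∑ e ∈ Ew, ψ e := by
        have h := hcov w hw
        rw [hEwdef]
        exact h
      have hsb := stepBound G w f u Ew ψ (fun e he => hψ0 e (hEwE he))
        (fun e he => ⟨(hu_spec e he).1, (hu_spec e he).2.1⟩) (hβ0 w hw) hcovw
      have hite0 : (0:ℝ) ≤ (if ∀ e ∈ E', Sym2.map f e ∈ G.edgeFinset then (1:ℝ) else 0) := by
        split_ifs <;> norm_num
      have hprod0 : (0:ℝ) ≤ ∏ v ∈ s', d (f v) ^ β v :=
        Finset.prod_nonneg fun v _ => Real.rpow_nonneg (hd0 _) _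
      have hP : ∏ v ∈ s', d (f v) ^ β' v
          = (∏ e ∈ Ew, d (f (u e)) ^ ψ e) * ∏ v ∈ s', d (f v) ^ β v := by
        have h1 : ∀ v ∈ s', d (f v) ^ β' v
            = d (f v) ^ β v * d (f v) ^ (∑ e ∈ Ew.filter (fun e => v ∈ e), ψ e) := by
          intro v hv
          simp only [hβ'def]
          exact Real.rpow_add_of_nonneg (hd0 _) (hβ0 v (Finset.mem_of_mem_erase hv))
            (Finset.sum_nonneg fun e he => hψ0 e (hEwE (Finset.mem_of_mem_filter e he)))
        rw [Finset.prod_congr rfl h1, Finset.prod_mul_distrib,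
          htrans (fun v => d (f v)) (fun v => hd0 _)]
        ring
      calc ∑ x : V, F (Function.update f w x)
          = (∑ x : V, (if ∀ e ∈ Ew, Sym2.map (Function.update f w x) e ∈ G.edgeFinset then (1:ℝ) else 0) * d x ^ β w)
            * ((if ∀ e ∈ E', Sym2.map f e ∈ G.edgeFinset then (1:ℝ) else 0) * ∏ v ∈ s', d (f v) ^ β v) := by
            rw [Finset.sum_mul]
            exact Finset.sum_congr rfl (fun x _ => h_upd f x)
        _ ≤ (M ^ β w * ∏ e ∈ Ew, d (f (u e)) ^ ψ e)
            * ((if ∀ e ∈ E', Sym2.map f e ∈ G.edgeFinset then (1:ℝ) else 0) * ∏ v ∈ s', d (f v) ^ β v) :=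
            mul_le_mul_of_nonneg_right hsb (mul_nonneg hite0 hprod0)
        _ = M ^ β w * F' f := by
            simp only [hF'def]
            rw [hP]
            ring
    have hIH' : ∑ f : W → V, F' f
        ≤ C ^ (s'ᶜ.card) * ((∏ e ∈ E', M ^ ψ e) * ∏ v ∈ s', M ^ β' v) := by
      have hcard' : s'.card = n := by
        rw [hs'def, Finset.card_erase_of_mem hw, hs]
        omega
      have hends' : ∀ e ∈ E', ∀ v ∈ e, v ∈ s' := by
        intro e he v hv
        have he' := he
        rw [hE'def, Finset.mem_filter] at he'
        rw [hs'def, Finset.mem_erase]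
        exact ⟨fun hvw => he'.2 (hvw ▸ hv), hends e (hE'E he) v hv⟩
      have hβ'0 : ∀ v ∈ s', 0 ≤ β' v := by
        intro v hv
        simp only [hβ'def]
        exact add_nonneg (hβ0 v (Finset.mem_of_mem_erase hv))
          (Finset.sum_nonneg fun e he => hψ0 e (hEwE (Finset.mem_of_mem_filter e he)))
      have hcov' : ∀ v ∈ s', 1 ≤ β' v + ∑ e ∈ E'.filter (fun e => v ∈ e), ψ e := by
        intro v hv
        have h := hcov v (Finset.mem_of_mem_erase hv)
        rw [hsplit_cov v] at h
        simp only [hβ'def]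
        linarith
      exact ih s' E' β' hcard' (fun e he => hψ0 e (hE'E he)) (fun e he => hdiag e (hE'E he))
        hends' hβ'0 hcov'
    have hkey : C * ∑ f : W → V, F f ≤ M ^ β w * ∑ f : W → V, F' f := by
      rw [hCdef, ← sum_update_eq w F]
      calc ∑ f : W → V, ∑ x : V, F (Function.update f w x)
          ≤ ∑ f : W → V, M ^ β w * F' f := Finset.sum_le_sum (fun f _ => hstep f)
        _ = M ^ β w * ∑ f : W → V, F' f := by rw [← Finset.mul_sum]
    have hccard : s'ᶜ.card = sᶜ.card + 1 := by
      rw [hs'def, Finset.compl_erase, Finset.card_insert_of_notMem (by simp [hw])]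
    have hPM : ∏ v ∈ s', M ^ β' v = (∏ e ∈ Ew, M ^ ψ e) * ∏ v ∈ s', M ^ β v := by
      have h1 : ∀ v ∈ s', M ^ β' v
          = M ^ β v * M ^ (∑ e ∈ Ew.filter (fun e => v ∈ e), ψ e) := by
        intro v hv
        simp only [hβ'def]
        exact Real.rpow_add_of_nonneg hM0 (hβ0 v (Finset.mem_of_mem_erase hv))
          (Finset.sum_nonneg fun e he => hψ0 e (hEwE (Finset.mem_of_mem_filter e he)))
      rw [Finset.prod_congr rfl h1, Finset.prod_mul_distrib, htrans (fun _ => M) (fun _ => hM0)]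
      ring
    have hEprod : (∏ e ∈ Ew, M ^ ψ e) * (∏ e ∈ E', M ^ ψ e) = ∏ e ∈ E, M ^ ψ e := by
      rw [hEwdef, hE'def]
      exact Finset.prod_filter_mul_prod_filter_not E _ _
    have hsprod : M ^ β w * ∏ v ∈ s', M ^ β v = ∏ v ∈ s, M ^ β v := by
      rw [hs'def]
      exact Finset.mul_prod_erase s (fun v => M ^ β v) hw
    have h8 : ∑ f : W → V, F f
        ≤ C⁻¹ * (M ^ β w * (C ^ (s'ᶜ.card) * ((∏ e ∈ E', M ^ ψ e) * ∏ v ∈ s', M ^ β' v))) := by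
      rw [← mul_le_mul_iff_right₀ hC, ← mul_assoc, mul_inv_cancel₀ (ne_of_gt hC), one_mul]
      exact hkey.trans (mul_le_mul_of_nonneg_left hIH' (Real.rpow_nonneg hM0 (β w)))
    calc ∑ f : W → V, F f
        ≤ C⁻¹ * (M ^ β w * (C ^ (s'ᶜ.card) * ((∏ e ∈ E', M ^ ψ e) * ∏ v ∈ s', M ^ β' v))) := h8
      _ = C ^ sᶜ.card * ((∏ e ∈ E, M ^ ψ e) * ∏ v ∈ s, M ^ β v) := by
          rw [hPM, hccard, pow_succ, ← hEprod, ← hsprod]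
          field_simp

open scoped Classical in
lemma count_le_prod {V W : Type*} [Fintype V] [Fintype W]
    (G : SimpleGraph V) (H : SimpleGraph W) (ψ : Sym2 W → ℝ) (hψ : IsFracEdgeCover H ψ) :
    ({G' : G.Subgraph | Nonempty (G'.coe ≃g H)}.ncard : ℝ)
      ≤ ∏ e ∈ H.edgeFinset, (2 * G.edgeFinset.card : ℝ) ^ ψ e := by
  classical
  have hprodpos : (0:ℝ) ≤ ∏ e ∈ H.edgeFinset, (2 * G.edgeFinset.card : ℝ) ^ ψ e :=
    Finset.prod_nonneg fun e _ => Real.rpow_nonneg (by positivity) _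
  set S : Set G.Subgraph := {G' : G.Subgraph | Nonempty (G'.coe ≃g H)} with hSdef
  rcases Set.eq_empty_or_nonempty S with hS | hS
  · rw [hS]
    simpa using hprodpos
  obtain ⟨G0, hG0⟩ := hS
  set T : Finset (W → V) :=
    Finset.univ.filter (fun f => ∀ e ∈ H.edgeFinset, Sym2.map f e ∈ G.edgeFinset) with hTdef
  -- the injection
  set Φ : G.Subgraph → (W → V) := fun G' =>
    if h : Nonempty (G'.coe ≃g H) then (fun x => ((h.some.symm x : G'.verts) : V))
    else (fun x => ((hG0.some.symm x : G0.verts) : V)) with hΦdef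
  have hΦval : ∀ G' : G.Subgraph, ∀ h : Nonempty (G'.coe ≃g H),
      Φ G' = fun x => ((h.some.symm x : G'.verts) : V) := by
    intro G' h
    rw [hΦdef]
    simp [dif_pos h]
  -- characterization of a member via its Φ
  have hverts : ∀ G' ∈ S, G'.verts = Set.range (Φ G') := by
    intro G' hG'
    have h : Nonempty (G'.coe ≃g H) := hG'
    rw [hΦval G' h]
    ext a
    constructor
    · intro ha
      exact ⟨h.some ⟨a, ha⟩, by simp⟩
    · rintro ⟨x, rfl⟩
      exact (h.some.symm x).2
  have hadj : ∀ G' ∈ S, ∀ a b : V,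
      (G'.Adj a b ↔ ∃ x y : W, H.Adj x y ∧ Φ G' x = a ∧ Φ G' y = b) := by
    intro G' hG' a b
    have h : Nonempty (G'.coe ≃g H) := hG'
    set φ := h.some with hφ
    constructor
    · intro hab
      have ha : a ∈ G'.verts := hab.fst_mem
      have hb : b ∈ G'.verts := hab.snd_mem
      have hcoe : G'.coe.Adj ⟨a, ha⟩ ⟨b, hb⟩ := hab
      have hH : H.Adj (φ ⟨a, ha⟩) (φ ⟨b, hb⟩) := by
        have := φ.symm.map_adj_iff (v := φ ⟨a, ha⟩) (w := φ ⟨b, hb⟩)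
        rw [φ.symm_apply_apply, φ.symm_apply_apply] at this
        exact this.mp hcoe
      refine ⟨φ ⟨a, ha⟩, φ ⟨b, hb⟩, hH, ?_, ?_⟩
      · rw [hΦval G' h, ← hφ]
        simp [φ.symm_apply_apply]
      · rw [hΦval G' h, ← hφ]
        simp [φ.symm_apply_apply]
    · rintro ⟨x, y, hxy, rfl, rfl⟩
      have hcoe : G'.coe.Adj (φ.symm x) (φ.symm y) := φ.symm.map_adj_iff.mpr hxy
      rw [hΦval G' h, ← hφ]
      exact hcoe
  have hmapsTo : ∀ G' ∈ S, Φ G' ∈ T := by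
    intro G' hG'
    have h : Nonempty (G'.coe ≃g H) := hG'
    rw [hTdef, Finset.mem_filter]
    refine ⟨Finset.mem_univ _, ?_⟩
    intro e he
    induction e using Sym2.ind with
    | _ x y =>
      have hxy : H.Adj x y := by
        rw [SimpleGraph.mem_edgeFinset, SimpleGraph.mem_edgeSet] at he
        exact he
      rw [Sym2.map_pair_eq, SimpleGraph.mem_edgeFinset, SimpleGraph.mem_edgeSet]
      have : G'.Adj (Φ G' x) (Φ G' y) := (hadj G' hG' _ _).mpr ⟨x, y, hxy, rfl, rfl⟩
      exact this.adj_sub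
  have hinj : Set.InjOn Φ S := by
    intro G1 hG1 G2 hG2 heq
    apply SimpleGraph.Subgraph.ext
    · rw [hverts G1 hG1, hverts G2 hG2, heq]
    · ext a b
      rw [hadj G1 hG1 a b, hadj G2 hG2 a b, heq]
  have hcount : S.ncard ≤ T.card := by
    rw [← Set.ncard_coe_finset]
    exact Set.ncard_le_ncard_of_injOn Φ (fun a ha => hmapsTo a ha) hinj (T : Set (W → V)).toFinite
  -- now apply key_ind
  have hbound := key_ind G ψ (Finset.univ : Finset W).card Finset.univ H.edgeFinset (fun _ => 0)
    rfl (fun e he => (hψ.1 e he).1) (fun e he => SimpleGraph.not_isDiag_of_mem_edgeFinset he)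
    (fun e _ v _ => Finset.mem_univ v) (fun v _ => le_rfl)
    (fun v _ => by rw [zero_add]; exact hψ.2 v)
  simp only [Real.rpow_zero, Finset.prod_const_one, mul_one, Finset.compl_univ,
    Finset.card_empty, pow_zero, one_mul] at hbound
  rw [Finset.sum_boole] at hbound
  calc (S.ncard : ℝ) ≤ (T.card : ℝ) := by exact_mod_cast hcount
    _ ≤ ∏ e ∈ H.edgeFinset, (2 * G.edgeFinset.card : ℝ) ^ ψ e := by
        rw [hTdef]
        exact hbound


open scoped Classical in
/-- The number of subgraphs of `G` isomorphic to `H` is at most `Π_{e ∈ E_H} (2m)^{ψ(e)}`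
for any fractional edge-cover `ψ` of `H`; in particular it is at most `(2m)^{ρ(H)}`. -/
theorem card_copies_le_of_fracEdgeCover
    {V W : Type*} [Fintype V] [Fintype W]
    (G : SimpleGraph V) (H : SimpleGraph W) (m : ℕ) (hm : G.edgeFinset.card = m)
    (ψ : Sym2 W → ℝ) (hψ : IsFracEdgeCover H ψ) :
    ({G' : G.Subgraph | Nonempty (G'.coe ≃g H)}.ncard : ℝ)
        ≤ ∏ e ∈ H.edgeFinset, (2 * m : ℝ) ^ (ψ e) ∧
    ({G' : G.Subgraph | Nonempty (G'.coe ≃g H)}.ncard : ℝ)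
        ≤ (2 * m : ℝ) ^ (fracEdgeCoverNum H) := by
  classical
  subst hm
  set c : ℝ := ({G' : G.Subgraph | Nonempty (G'.coe ≃g H)}.ncard : ℝ) with hcdef
  have hc0 : 0 ≤ c := Nat.cast_nonneg _
  have h1 : c ≤ ∏ e ∈ H.edgeFinset, (2 * G.edgeFinset.card : ℝ) ^ ψ e :=
    count_le_prod G H ψ hψ
  refine ⟨h1, ?_⟩
  set Sset : Set ℝ := {x : ℝ | ∃ ψ' : Sym2 W → ℝ, IsFracEdgeCover H ψ' ∧ x = coverWeight H ψ'}
    with hSsetdef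
  have hSne : Sset.Nonempty := ⟨coverWeight H ψ, ψ, hψ, rfl⟩
  have hSbdd : BddBelow Sset := by
    refine ⟨0, ?_⟩
    rintro x ⟨ψ', hψ', rfl⟩
    exact Finset.sum_nonneg fun e he => (hψ'.1 e he).1
  have hub : ∀ x ∈ Sset, c ≤ (2 * G.edgeFinset.card : ℝ) ^ x := by
    rintro x ⟨ψ', hψ', rfl⟩
    calc c ≤ ∏ e ∈ H.edgeFinset, (2 * G.edgeFinset.card : ℝ) ^ ψ' e :=
          count_le_prod G H ψ' hψ'
      _ = (2 * G.edgeFinset.card : ℝ) ^ coverWeight H ψ' := by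
          unfold coverWeight
          exact (Real.rpow_sum_of_nonneg (by positivity) (fun e he => (hψ'.1 e he).1)).symm
  have hEq : fracEdgeCoverNum H = sInf Sset := rfl
  rw [hEq]
  by_cases hE : H.edgeFinset = ∅
  · -- every cover has weight 0
    have hall : ∀ x ∈ Sset, x = 0 := by
      rintro x ⟨ψ', hψ', rfl⟩
      unfold coverWeight
      rw [hE, Finset.sum_empty]
    have hInf : sInf Sset = 0 := by
      obtain ⟨x, hx⟩ := id hSne
      have hx0 := hall x hx
      apply le_antisymm
      · exact hx0 ▸ csInf_le hSbdd hx
      · exact le_csInf hSne (fun y hy => (hall y hy).ge)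
    rw [hInf, Real.rpow_zero]
    obtain ⟨x, hx⟩ := id hSne
    have := hub x hx
    rw [hall x hx, Real.rpow_zero] at this
    exact this
  · by_cases hm0 : G.edgeFinset.card = 0
    · -- G has no edges but H does: no copies
      have hGbot : G.edgeSet = ∅ := by
        rw [← SimpleGraph.coe_edgeFinset, Finset.card_eq_zero.mp hm0]
        simp
      have hempty : {G' : G.Subgraph | Nonempty (G'.coe ≃g H)} = ∅ := by
        ext G'
        simp only [Set.mem_setOf_eq, Set.mem_empty_iff_false, iff_false]
        rintro ⟨φ⟩
        obtain ⟨e, he⟩ := Finset.nonempty_of_ne_empty hE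
        induction e using Sym2.ind with
        | _ x y =>
          have hxy : H.Adj x y := by
            rw [SimpleGraph.mem_edgeFinset, SimpleGraph.mem_edgeSet] at he
            exact he
          have hcoe : G'.coe.Adj (φ.symm x) (φ.symm y) := φ.symm.map_adj_iff.mpr hxy
          have hGadj : G.Adj (φ.symm x) (φ.symm y) := G'.coe_adj_sub _ _ hcoe
          have : s((φ.symm x : V), (φ.symm y : V)) ∈ G.edgeSet := hGadj
          rw [hGbot] at this
          exact this
      have : c = 0 := by
        rw [hcdef, hempty]
        simp
      rw [this]
      exact Real.rpow_nonneg (by positivity) _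
    · -- 1 ≤ 2m
      have hm1 : 1 ≤ G.edgeFinset.card := Nat.one_le_iff_ne_zero.mpr hm0
      have h2m : (1:ℝ) ≤ 2 * G.edgeFinset.card := by
        have : (1:ℝ) ≤ (G.edgeFinset.card : ℝ) := by exact_mod_cast hm1
        linarith
      have hmono : Monotone (fun x : ℝ => (2 * G.edgeFinset.card : ℝ) ^ x) :=
        fun a b hab => Real.rpow_le_rpow_of_exponent_le h2m hab
      have hcont : ContinuousAt (fun x : ℝ => (2 * G.edgeFinset.card : ℝ) ^ x) (sInf Sset) :=
        Real.continuousAt_const_rpow (by linarith)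
      have hmap := Monotone.map_csInf_of_continuousAt hcont hmono hSne hSbdd
      rw [hmap]
      apply le_csInf (hSne.image _)
      rintro y ⟨x, hx, rfl⟩
      exact hub x hx
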